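/- Let f : [a,b] → X be continuous, G ⊂ (a,b) open with complement H := [a,b] \ G, and let (a_t,b_t), t ∈ T, be the components of G. If H¹(f(H)) = 0, then V(f,[a,b]) = ∑_{t∈T} V(f,[a_t,b_t]). -/

import Mathlib

open MeasureTheory

/-- Superadditivity of variation over ordered disjoint subintervals. -/
private lemma sum_eVar_le {X : Type*} [NormedAddCommGroup X] (f : ℝ → X)
    {ι : Type*} [DecidableEq ι] (c d : ι → ℝ) (s : Finset ι) :
    ∀ A B : ℝ, A ≤ B → (∀ i ∈ s, A ≤ c i) → (∀ i ∈ s, c i < d i) → (∀ i ∈ s, d i ≤ B) →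
    (∀ i ∈ s, ∀ j ∈ s, i ≠ j → d i ≤ c j ∨ d j ≤ c i) →
    ∑ i ∈ s, eVariationOn f (Set.Icc (c i) (d i)) ≤ eVariationOn f (Set.Icc A B) := by
  induction s using Finset.strongInduction with
  | _ s ih =>
    intro A B hAB hA hcd hB hord
    rcases s.eq_empty_or_nonempty with rfl | hne
    · simp
    obtain ⟨i, hi, hmax⟩ := s.exists_max_image c hne
    have h1 : ∀ j ∈ s.erase i, d j ≤ c i := by
      intro j hj
      have hj' := Finset.mem_of_mem_erase hj
      have hne' := Finset.ne_of_mem_erase hj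
      rcases hord i hi j hj' hne'.symm with h | h
      · exact absurd ((hcd i hi).trans_le (h.trans (hmax j hj'))) (lt_irrefl _)
      · exact h
    have key := ih (s.erase i) (Finset.erase_ssubset hi) A (c i) (hA i hi)
      (fun j hj => hA j (Finset.mem_of_mem_erase hj))
      (fun j hj => hcd j (Finset.mem_of_mem_erase hj))
      h1
      (fun j hj k hk hjk =>
        hord j (Finset.mem_of_mem_erase hj) k (Finset.mem_of_mem_erase hk) hjk)
    have h2 : eVariationOn f (Set.Icc (c i) (d i)) ≤ eVariationOn f (Set.Icc (c i) B) :=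
      eVariationOn.mono f (Set.Icc_subset_Icc le_rfl (hB i hi))
    have hsplit : eVariationOn f (Set.Icc A (c i)) + eVariationOn f (Set.Icc (c i) B)
        = eVariationOn f (Set.Icc A B) := by
      have := eVariationOn.Icc_add_Icc f (s := (Set.univ : Set ℝ)) (hA i hi)
        ((hcd i hi).le.trans (hB i hi)) (Set.mem_univ _)
      simpa using this
    calc ∑ j ∈ s, eVariationOn f (Set.Icc (c j) (d j))
        = eVariationOn f (Set.Icc (c i) (d i))
          + ∑ j ∈ s.erase i, eVariationOn f (Set.Icc (c j) (d j)) :=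
          (Finset.add_sum_erase s _ hi).symm
      _ ≤ eVariationOn f (Set.Icc (c i) B) + eVariationOn f (Set.Icc A (c i)) :=
          add_le_add h2 key
      _ = _ := by rw [add_comm, hsplit]

/-- diameter bound: distance of endpoint values is at most `ℋ¹` of the image. -/
private lemma edist_le_hausdorff {X : Type*} [NormedAddCommGroup X] [NormedSpace ℝ X]
    [MeasurableSpace X] [BorelSpace X] (f : ℝ → X) {c d : ℝ} (hcd : c ≤ d)
    (hf : ContinuousOn f (Set.Icc c d)) :
    edist (f c) (f d) ≤ μH[1] (f '' Set.Icc c d) := by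
  set g : X → ℝ := fun x => dist (f c) x with hg
  have hglip : LipschitzWith 1 g := LipschitzWith.dist_right (f c)
  have hconn : IsPreconnected (g '' (f '' Set.Icc c d)) :=
    (isPreconnected_Icc.image f hf).image g hglip.continuous.continuousOn
  have h0 : (0 : ℝ) ∈ g '' (f '' Set.Icc c d) :=
    ⟨f c, ⟨c, ⟨le_rfl, hcd⟩, rfl⟩, dist_self _⟩
  have hD : dist (f c) (f d) ∈ g '' (f '' Set.Icc c d) := ⟨f d, ⟨d, ⟨hcd, le_rfl⟩, rfl⟩, rfl⟩
  have hsub : Set.Icc 0 (dist (f c) (f d)) ⊆ g '' (f '' Set.Icc c d) :=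
    hconn.Icc_subset h0 hD
  calc edist (f c) (f d) = ENNReal.ofReal (dist (f c) (f d)) := edist_dist _ _
    _ = volume (Set.Icc 0 (dist (f c) (f d))) := by rw [Real.volume_Icc, sub_zero]
    _ = μH[1] (Set.Icc 0 (dist (f c) (f d))) := by rw [MeasureTheory.hausdorffMeasure_real]
    _ ≤ μH[1] (g '' (f '' Set.Icc c d)) := measure_mono hsub
    _ ≤ μH[1] (f '' Set.Icc c d) := by
        simpa using hglip.hausdorffMeasure_image_le (by norm_num : (0:ℝ) ≤ 1) (f '' Set.Icc c d)

/-- The `ℋ¹` measure of the image of an interval is at most the variation. -/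
private lemma hausdorff_image_le {X : Type*} [NormedAddCommGroup X] [NormedSpace ℝ X]
    [MeasurableSpace X] [BorelSpace X] (f : ℝ → X) (c d : ℝ) :
    μH[1] (f '' Set.Icc c d) ≤ eVariationOn f (Set.Icc c d) := by
  rcases lt_or_ge d c with hdc | hcd
  · simp [Set.Icc_eq_empty_of_lt hdc]
  rcases eq_top_or_lt_top (eVariationOn f (Set.Icc c d)) with htop | hfin
  · simp [htop]
  set s := Set.Icc c d with hs
  have hBV : BoundedVariationOn f s := hfin.ne
  have hLBV : LocallyBoundedVariationOn f s := hBV.locallyBoundedVariationOn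
  set φ : ℝ → ℝ := fun x => variationOnFromTo f s c x with hφ
  have hcs : c ∈ s := ⟨le_rfl, hcd⟩
  have hds : d ∈ s := ⟨hcd, le_rfl⟩
  have hkey : ∀ x ∈ s, ∀ y ∈ s, x ≤ y → edist (f x) (f y) ≤ ENNReal.ofReal (φ y - φ x) := by
    intro x hx y hy hxy
    have hadd : φ x + variationOnFromTo f s x y = φ y := variationOnFromTo.add hLBV hcs hx hy
    have heq : φ y - φ x = variationOnFromTo f s x y := by linarith
    rw [heq, variationOnFromTo.eq_of_le f s hxy, ENNReal.ofReal_toReal]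
    · exact eVariationOn.edist_le f ⟨hx, le_rfl, hxy⟩ ⟨hy, hxy, le_rfl⟩
    · exact ((eVariationOn.mono f Set.inter_subset_left).trans_lt hfin).ne
  have hlip : ∀ x ∈ s, ∀ y ∈ s, edist (f x) (f y) ≤ edist (φ x) (φ y) := by
    intro x hx y hy
    rcases le_total x y with h | h
    · refine (hkey x hx y hy h).trans ?_
      rw [edist_dist, Real.dist_eq]
      exact ENNReal.ofReal_le_ofReal (by rw [abs_sub_comm]; exact le_abs_self _)
    · rw [edist_comm (f x), edist_comm (φ x)]
      refine (hkey y hy x hx h).trans ?_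
      rw [edist_dist, Real.dist_eq]
      exact ENNReal.ofReal_le_ofReal (by rw [abs_sub_comm]; exact le_abs_self _)
  set g : ℝ → X := f ∘ Function.invFunOn φ s with hgdef
  have hginv : ∀ x ∈ s, g (φ x) = f x := by
    intro x hx
    have hex : ∃ a ∈ s, φ a = φ x := ⟨x, hx, rfl⟩
    have h1 : Function.invFunOn φ s (φ x) ∈ s := Function.invFunOn_mem hex
    have h2 : φ (Function.invFunOn φ s (φ x)) = φ x := Function.invFunOn_eq hex
    have h3 := hlip _ h1 x hx
    rw [h2, edist_self] at h3
    exact edist_eq_zero.mp (le_antisymm h3 zero_le)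
  have himg : f '' s ⊆ g '' (φ '' s) := by
    rintro _ ⟨x, hx, rfl⟩
    exact ⟨φ x, ⟨x, hx, rfl⟩, hginv x hx⟩
  have hgl : LipschitzOnWith 1 g (φ '' s) := by
    intro u hu v hv
    obtain ⟨x, hx, rfl⟩ := hu
    obtain ⟨y, hy, rfl⟩ := hv
    rw [hginv x hx, hginv y hy, ENNReal.coe_one, one_mul]
    exact hlip x hx y hy
  have hφmono : MonotoneOn φ s := variationOnFromTo.monotoneOn hLBV hcs
  have hφsub : φ '' s ⊆ Set.Icc (φ c) (φ d) := by
    rintro _ ⟨x, hx, rfl⟩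
    exact ⟨hφmono hcs hx hx.1, hφmono hx hds hx.2⟩
  have hφc : φ c = 0 := variationOnFromTo.self f s c
  calc μH[1] (f '' s) ≤ μH[1] (g '' (φ '' s)) := measure_mono himg
    _ ≤ μH[1] (φ '' s) := by
        simpa using hgl.hausdorffMeasure_image_le (by norm_num : (0:ℝ) ≤ 1)
    _ ≤ μH[1] (Set.Icc (φ c) (φ d)) := measure_mono hφsub
    _ = ENNReal.ofReal (φ d - φ c) := by
        rw [MeasureTheory.hausdorffMeasure_real, Real.volume_Icc]
    _ ≤ eVariationOn f s := by
        rw [hφc, sub_zero]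
        show ENNReal.ofReal (variationOnFromTo f s c d) ≤ _
        rw [variationOnFromTo.eq_of_le f s hcd, ENNReal.ofReal_toReal
          ((eVariationOn.mono f Set.inter_subset_left).trans_lt hfin).ne]
        exact eVariationOn.mono f Set.inter_subset_left
/-- Lemma H1L(i): if the image of the complement of `G` in `[a,b]` is `ℋ¹`-null,
then the variation of `f` on `[a,b]` is the sum of the variations over the closures
of the connected components `(l t, r t)` of the open set `G`. -/
theorem stmt_5 {X : Type*} [NormedAddCommGroup X] [NormedSpace ℝ X]
    [MeasurableSpace X] [BorelSpace X]
    (a b : ℝ) (hab : a < b) (f : ℝ → X) (hf : ContinuousOn f (Set.Icc a b))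
    (G : Set ℝ) (hG : G ⊆ Set.Ioo a b)
    (T : Type*) (l r : T → ℝ) (hlr : ∀ t, l t < r t)
    (hunion : G = ⋃ t, Set.Ioo (l t) (r t))
    (hdisj : Pairwise (Function.onFun Disjoint fun t => Set.Ioo (l t) (r t)))
    (hmax : ∀ t, l t ∉ G ∧ r t ∉ G)
    (hH : μH[1] (f '' (Set.Icc a b \ G)) = 0) :
    eVariationOn f (Set.Icc a b) = ∑' t, eVariationOn f (Set.Icc (l t) (r t)) := by
  classical
  -- `T` is countable
  have hqex : ∀ t, ∃ q : ℚ, (q : ℝ) ∈ Set.Ioo (l t) (r t) := by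
    intro t
    obtain ⟨q, h1, h2⟩ := exists_rat_btwn (hlr t)
    exact ⟨q, h1, h2⟩
  choose q hq using hqex
  have hqinj : Function.Injective q := by
    intro t t' h
    by_contra hne
    exact (hdisj hne).le_bot ⟨hq t, h ▸ hq t'⟩
  haveI : Countable T := hqinj.countable
  have hIooG : ∀ t, Set.Ioo (l t) (r t) ⊆ G := fun t =>
    hunion ▸ Set.subset_iUnion (fun t => Set.Ioo (l t) (r t)) t
  have hbounds : ∀ t, a ≤ l t ∧ r t ≤ b := fun t =>
    (Set.Ioo_subset_Ioo_iff (hlr t)).mp ((hIooG t).trans hG)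
  have horder : ∀ t t', t ≠ t' → r t ≤ l t' ∨ r t' ≤ l t := by
    intro t t' h
    by_contra hcon
    push_neg at hcon
    have hne : (Set.Ioo (l t) (r t) ∩ Set.Ioo (l t') (r t')).Nonempty := by
      rw [Set.Ioo_inter_Ioo, Set.nonempty_Ioo]
      exact max_lt (lt_min (hlr t) hcon.2) (lt_min hcon.1 (hlr t'))
    obtain ⟨x, hx⟩ := hne
    exact (hdisj h).le_bot hx
  refine le_antisymm ?_ ?_
  · -- `≤` : the hard direction
    rw [eVariationOn]
    refine iSup_le ?_
    rintro ⟨n, u, hu, us⟩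
    have key : ∀ i : ℕ, edist (f (u (i + 1))) (f (u i)) ≤
        ∑' t, eVariationOn f (Set.Icc (u i ⊔ l t) (u (i + 1) ⊓ r t)) := by
      intro i
      have hui : u i ≤ u (i + 1) := hu (Nat.le_succ i)
      have hIccab : Set.Icc (u i) (u (i + 1)) ⊆ Set.Icc a b :=
        Set.Icc_subset_Icc (us i).1 (us (i + 1)).2
      have h1 : edist (f (u (i + 1))) (f (u i)) ≤ μH[1] (f '' Set.Icc (u i) (u (i + 1))) := by
        rw [edist_comm]
        exact edist_le_hausdorff f hui (hf.mono hIccab)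
      refine h1.trans ?_
      have hcover : Set.Icc (u i) (u (i + 1)) ⊆
          (Set.Icc a b \ G) ∪ ⋃ t, Set.Icc (u i) (u (i + 1)) ∩ Set.Icc (l t) (r t) := by
        intro x hx
        by_cases hxG : x ∈ G
        · rw [hunion] at hxG
          obtain ⟨t, ht⟩ := Set.mem_iUnion.mp hxG
          exact Or.inr (Set.mem_iUnion.mpr ⟨t, hx, Set.Ioo_subset_Icc_self ht⟩)
        · exact Or.inl ⟨hIccab hx, hxG⟩
      have h2 : μH[1] (f '' Set.Icc (u i) (u (i + 1))) ≤
          μH[1] (f '' (Set.Icc a b \ G)) +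
            ∑' t, μH[1] (f '' (Set.Icc (u i) (u (i + 1)) ∩ Set.Icc (l t) (r t))) := by
        refine (measure_mono (Set.image_mono (f := f) hcover)).trans ?_
        rw [Set.image_union]
        refine (measure_union_le _ _).trans ?_
        refine add_le_add le_rfl ?_
        rw [Set.image_iUnion]
        exact measure_iUnion_le _
      refine h2.trans ?_
      rw [hH, zero_add]
      refine ENNReal.tsum_le_tsum fun t => ?_
      rw [Set.Icc_inter_Icc]
      exact hausdorff_image_le f _ _
    calc ∑ i ∈ Finset.range n, edist (f (u (i + 1))) (f (u i))
        ≤ ∑ i ∈ Finset.range n, ∑' t,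
            eVariationOn f (Set.Icc (u i ⊔ l t) (u (i + 1) ⊓ r t)) :=
          Finset.sum_le_sum fun i _ => key i
      _ = ∑' t, ∑ i ∈ Finset.range n,
            eVariationOn f (Set.Icc (u i ⊔ l t) (u (i + 1) ⊓ r t)) :=
          (Summable.tsum_finsetSum fun i _ => ENNReal.summable).symm
      _ ≤ ∑' t, eVariationOn f (Set.Icc (l t) (r t)) := by
          refine ENNReal.tsum_le_tsum fun t => ?_
          have hzero : ∀ i ∈ (Finset.range n).filter
              fun i => ¬ u i ⊔ l t < u (i + 1) ⊓ r t,
              eVariationOn f (Set.Icc (u i ⊔ l t) (u (i + 1) ⊓ r t)) = 0 := by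
            intro i hi
            exact eVariationOn.subsingleton f
              (Set.subsingleton_Icc_of_ge (not_lt.mp (Finset.mem_filter.mp hi).2))
          have hsum : ∑ i ∈ Finset.range n,
              eVariationOn f (Set.Icc (u i ⊔ l t) (u (i + 1) ⊓ r t)) =
              ∑ i ∈ (Finset.range n).filter (fun i => u i ⊔ l t < u (i + 1) ⊓ r t),
                eVariationOn f (Set.Icc (u i ⊔ l t) (u (i + 1) ⊓ r t)) := by
            rw [← Finset.sum_filter_add_sum_filter_not (Finset.range n)
              (fun i => u i ⊔ l t < u (i + 1) ⊓ r t), Finset.sum_eq_zero hzero, add_zero]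
          rw [hsum]
          refine sum_eVar_le f (fun i => u i ⊔ l t) (fun i => u (i + 1) ⊓ r t) _
            (l t) (r t) (hlr t).le
            (fun i _ => le_sup_right)
            (fun i hi => (Finset.mem_filter.mp hi).2)
            (fun i _ => inf_le_right)
            ?_
          intro i hi j hj hij
          rcases hij.lt_or_gt with h | h
          · exact Or.inl (inf_le_left.trans ((hu (Nat.succ_le_of_lt h)).trans le_sup_left))
          · exact Or.inr (inf_le_left.trans ((hu (Nat.succ_le_of_lt h)).trans le_sup_left))
  · -- `≥` : superadditivity
    rw [ENNReal.tsum_eq_iSup_sum]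
    refine iSup_le fun s => ?_
    exact sum_eVar_le f l r s a b hab.le (fun t _ => (hbounds t).1) (fun t _ => hlr t)
      (fun t _ => (hbounds t).2) (fun t _ t' _ h => horder t t' h)
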